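/- Let K be a finite abelian group generated by two elements σ and τ, let A = ord(σ), B = |K : ⟨σ⟩|, C = |K : ⟨τ⟩|, and set D = A/C (which is an integer). Then ord(τ) = D·B, lcm(ord(σ), ord(τ)) = D·lcm(C, B), and |K| = lcm(ord(σ), ord(τ)) · gcd(C, B). -/
import Mathlib


theorem stmt_6 {K : Type*} [CommGroup K] [Fintype K] (σ τ : K)
    (hgen : Subgroup.closure ({σ, τ} : Set K) = ⊤) :
    (Subgroup.zpowers τ).index ∣ orderOf σ ∧
    orderOf τ = (orderOf σ / (Subgroup.zpowers τ).index) * (Subgroup.zpowers σ).index ∧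
    Nat.lcm (orderOf σ) (orderOf τ) =
      (orderOf σ / (Subgroup.zpowers τ).index) *
        Nat.lcm ((Subgroup.zpowers τ).index) ((Subgroup.zpowers σ).index) ∧
    Fintype.card K =
      Nat.lcm (orderOf σ) (orderOf τ) *
        Nat.gcd ((Subgroup.zpowers τ).index) ((Subgroup.zpowers σ).index) := by
  set A := orderOf σ with hA
  set B := (Subgroup.zpowers σ).index with hB
  set C := (Subgroup.zpowers τ).index with hC
  set T := orderOf τ with hT
  -- quotient by ⟨τ⟩
  let f := QuotientGroup.mk' (Subgroup.zpowers τ)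
  have hfsurj : Function.Surjective f := QuotientGroup.mk'_surjective _
  have hftau : f τ = 1 := by
    simp [f, QuotientGroup.eq_one_iff, Subgroup.mem_zpowers]
  have htop : Subgroup.zpowers (f σ) = ⊤ := by
    rw [eq_top_iff, ← Subgroup.map_top_of_surjective f hfsurj, ← hgen,
      MonoidHom.map_closure]
    apply Subgroup.closure_le _ |>.2
    rintro x hx
    simp only [Set.image_insert_eq, Set.image_singleton, hftau] at hx
    rcases hx with h | h
    · exact h ▸ Subgroup.mem_zpowers _
    · simp at h; exact h ▸ (Subgroup.zpowers (f σ)).one_mem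
  have hCA : C ∣ A := by
    have h1 : C = orderOf (f σ) := by
      rw [hC, Subgroup.index_eq_card, ← Nat.card_zpowers (f σ), htop,
        Nat.card_congr Subgroup.topEquiv.toEquiv]
    rw [h1]
    exact orderOf_map_dvd f σ
  obtain ⟨D, hD⟩ := hCA
  have hC0 : 0 < C := Nat.pos_of_ne_zero (Subgroup.index_ne_zero_of_finite)
  have hDiv : A / C = D := by rw [hD]; exact Nat.mul_div_cancel_left D hC0
  have hAB : A * B = Fintype.card K := by
    rw [hA, hB, ← Nat.card_zpowers σ, ← Nat.card_eq_fintype_card (α := K)]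
    exact Subgroup.card_mul_index _
  have hTC : T * C = Fintype.card K := by
    rw [hT, hC, ← Nat.card_zpowers τ, ← Nat.card_eq_fintype_card (α := K)]
    exact Subgroup.card_mul_index _
  have hTeq : T = D * B := by
    have : C * T = C * (D * B) := by
      rw [mul_comm C T, hTC, ← hAB, hD]; ring
    exact Nat.eq_of_mul_eq_mul_left hC0 this
  refine ⟨⟨D, hD⟩, by rw [hDiv, hTeq], ?_, ?_⟩
  · rw [hDiv, hTeq, hD, mul_comm C D, Nat.lcm_mul_left]
  · rw [hTeq, hD, mul_comm C D, Nat.lcm_mul_left, ← hAB, hD,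
      mul_assoc D, mul_comm (Nat.lcm C B) (Nat.gcd C B), Nat.gcd_mul_lcm]
    ring
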